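/- Let A, B be n×n matrices over a field F of characteristic p > 0 with n < p, and let λ ∈ F be nonzero. If [A,B] = λB, then B is nilpotent. -/

import Mathlib

open Module

/-- If `u * b = b * v` then `u ^ k * b = b * v ^ k`. -/
lemma aux_pow_shift {R : Type*} [Ring R] (u v b : R) (h : u * b = b * v) :
    ∀ k : ℕ, u ^ k * b = b * v ^ k := by
  intro k
  induction k with
  | zero => simp
  | succ k ih =>
    rw [pow_succ, pow_succ, mul_assoc, h, ← mul_assoc, ih, mul_assoc]

set_option maxHeartbeats 1000000 in
/-- Let `A, B` be `n×n` matrices over a field of characteristic `p > 0` with `n < p`,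
and `λ ≠ 0`. If `[A,B] = λB`, then `B` is nilpotent. -/
theorem stmt5 (F : Type*) [Field F] (p : ℕ) [hp : Fact p.Prime] [CharP F p]
    (n : ℕ) (hn : n < p)
    (A B : Matrix (Fin n) (Fin n) F) (lam : F) (hlam : lam ≠ 0)
    (h1 : A * B - B * A = lam • B) : IsNilpotent B := by
  classical
  -- pass to the algebraic closure
  let K := AlgebraicClosure F
  let φ : F →+* K := algebraMap F K
  have hφ : Function.Injective φ := φ.injective
  let ψ : Matrix (Fin n) (Fin n) F →+* Matrix (Fin n) (Fin n) K := φ.mapMatrix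
  set A' : Matrix (Fin n) (Fin n) K := ψ A with hA'
  set B' : Matrix (Fin n) (Fin n) K := ψ B with hB'
  set l : K := φ lam with hl
  have hl0 : l ≠ 0 := fun h => hlam (hφ (show φ lam = φ 0 by rw [map_zero]; exact h))
  have h1' : A' * B' - B' * A' = l • B' := by
    have h2 := congrArg ψ h1
    rw [map_sub, map_mul, map_mul] at h2
    have h5 : ψ (lam • B) = l • ψ B := by
      rw [hl]
      show (lam • B).map φ = φ lam • B.map φ
      exact Matrix.map_smul' φ lam B (map_mul φ)
    rw [h2, h5, hB']
  -- it suffices to show B' is nilpotent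
  suffices h : IsNilpotent B' by
    obtain ⟨k, hk⟩ := h
    refine ⟨k, ?_⟩
    have h2 : ψ (B ^ k) = B' ^ k := by rw [map_pow]
    have h3 : ψ (B ^ k) = ψ 0 := by rw [h2, hk, map_zero]
    have h5 : Function.Injective ψ := fun X Y hXY =>
      Matrix.map_injective hφ hXY
    exact h5 h3
  -- move to endomorphisms
  let e : Matrix (Fin n) (Fin n) K ≃ₐ[K] ((Fin n → K) →ₗ[K] (Fin n → K)) :=
    Matrix.toLinAlgEquiv'
  set a : Module.End K (Fin n → K) := e A' with ha
  set b : Module.End K (Fin n → K) := e B' with hb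
  suffices h : IsNilpotent b by
    obtain ⟨k, hk⟩ := h
    refine ⟨k, e.injective ?_⟩
    rw [map_pow, map_zero]; exact hk
  have hab : a * b - b * a = l • b := by
    rw [ha, hb, ← map_mul e A' B', ← map_mul e B' A', ← map_sub e, h1', map_smul]
  -- B shifts generalized eigenspaces of A by l
  have key : ∀ μ : K, ∀ x ∈ a.maxGenEigenspace μ, b x ∈ a.maxGenEigenspace (μ + l) := by
    intro μ x hx
    rw [Module.End.mem_maxGenEigenspace] at hx ⊢
    obtain ⟨k, hk⟩ := hx
    refine ⟨k, ?_⟩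
    have hcomm : (a - (μ + l) • 1) * b = b * (a - μ • 1) := by
      have h2 : a * b = b * a + l • b := by
        rw [← hab]; abel
      rw [sub_mul, mul_sub, smul_mul_assoc, one_mul, mul_smul_comm, mul_one, h2, add_smul]
      abel
    have hps := aux_pow_shift _ _ b hcomm k
    calc ((a - (μ + l) • 1) ^ k) (b x) = (((a - (μ + l) • 1) ^ k) * b) x := rfl
      _ = (b * ((a - μ • 1) ^ k)) x := by rw [hps]
      _ = b (((a - μ • 1) ^ k) x) := rfl
      _ = 0 := by rw [hk, map_zero]
  -- iterate: b^k shifts by k * l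
  have key_pow : ∀ (k : ℕ) (μ : K), ∀ x ∈ a.maxGenEigenspace μ,
      (b ^ k) x ∈ a.maxGenEigenspace (μ + (k : K) * l) := by
    intro k
    induction k with
    | zero => intro μ x hx; simpa using hx
    | succ k ih =>
      intro μ x hx
      have h2 := key _ _ (ih μ x hx)
      have h3 : μ + (k : K) * l + l = μ + ((k : ℕ) + 1 : K) * l := by ring
      rw [h3] at h2
      have hx' : (b ^ (k + 1)) x = b ((b ^ k) x) := by
        rw [pow_succ']; rfl
      rw [hx']
      simpa using h2
  -- there are at most n < p nonzero generalized eigenspaces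
  haveI : Fintype {ν : K // a.maxGenEigenspace ν ≠ ⊥} :=
    a.independent_maxGenEigenspace.fintypeNeBotOfFiniteDimensional
  have hcard : Fintype.card {ν : K // a.maxGenEigenspace ν ≠ ⊥} ≤ n := by
    have h2 := a.independent_maxGenEigenspace.subtype_ne_bot_le_finrank
    simpa using h2
  -- for each μ, some space μ + j * l in the chain is ⊥, j < p
  have hbot : ∀ μ : K, ∃ j : ℕ, j < p ∧ a.maxGenEigenspace (μ + (j : K) * l) = ⊥ := by
    intro μ
    by_contra hcon
    push_neg at hcon
    let g : Fin p → {ν : K // a.maxGenEigenspace ν ≠ ⊥} :=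
      fun j => ⟨μ + (j : ℕ) * l, hcon j j.2⟩
    have hginj : Function.Injective g := by
      intro i j hij
      have h2 : μ + ((i : ℕ) : K) * l = μ + ((j : ℕ) : K) * l := congrArg Subtype.val hij
      have h3 : ((i : ℕ) : K) = ((j : ℕ) : K) := by
        have h4 : (((i : ℕ) : K) - ((j : ℕ) : K)) * l = 0 := by linear_combination h2
        rcases mul_eq_zero.mp h4 with h | h
        · exact sub_eq_zero.mp h
        · exact absurd h hl0
      exact Fin.ext (CharP.natCast_injOn_Iio K p i.2 j.2 h3)
    have h2 := Fintype.card_le_of_injective g hginj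
    rw [Fintype.card_fin] at h2
    omega
  -- conclude b ^ p = 0
  refine ⟨p, ?_⟩
  have htop : ⨆ μ : K, a.maxGenEigenspace μ = ⊤ := Module.End.iSup_maxGenEigenspace_eq_top a
  rw [← LinearMap.ker_eq_top, ← top_le_iff, ← htop]
  refine iSup_le fun μ x hx => ?_
  rw [LinearMap.mem_ker]
  obtain ⟨j, hjp, hj⟩ := hbot μ
  have hxj : (b ^ j) x = 0 := by
    have h2 := key_pow j μ x hx
    rw [hj] at h2
    simpa using h2
  have hsplit : b ^ p = b ^ (p - j) * b ^ j := by
    rw [← pow_add]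
    congr 1
    omega
  rw [hsplit]
  show (b ^ (p - j)) ((b ^ j) x) = 0
  rw [hxj, map_zero]
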